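/- Let A be an alternating Büchi automaton, ≼_F a reflexive and transitive forward simulation on A, and ≼_B a reflexive and transitive backward simulation on A parametrised by ≼_F. Let p, r be states with p ≼_B r, let T be a partial run of A on w ∈ Σ^ω, and let π ∈ branches(T) with leaf(π) = p. Then there exist a partial run U of A on w and ψ ∈ branches(U) with leaf(ψ) = r such that π ≼_B ψ componentwise and, for every 1 ≤ i ≤ |π|, T ⊖_i π ≼_F^∀∃ U ⊖_i ψ. -/

import Mathlib

/-- An alternating Büchi automaton over alphabet `σ` with states `Q`:
initial state `ι`, transition function `δ` (where `P ∈ δ q a` means `q →a P`),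
and accepting states `α`. -/
structure ABA (σ Q : Type*) where
  ι : Q
  δ : Q → σ → Set (Set Q)
  α : Set Q

variable {σ Q : Type*}

/-- The assumption `∅ ∉ δ(q, a)` for all `q, a`. -/
def ABA.NoEmpty (A : ABA σ Q) : Prop := ∀ q a, ∅ ∉ A.δ q a

/-- The set of successors of a path `π` in a tree `T ⊆ Q⁺`. -/
def succs (T : Set (List Q)) (π : List Q) : Set Q := {q | π ++ [q] ∈ T}

/-- A tree over `Q`: a set of nonempty finite words over `Q`, closed under nonempty
prefixes and containing exactly one word of length one (its root). -/
structure IsTree (T : Set (List Q)) : Prop where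
  not_nil : [] ∉ T
  prefix_closed : ∀ π ∈ T, ∀ ρ : List Q, ρ <+: π → ρ ≠ [] → ρ ∈ T
  root : ∃! q : Q, [q] ∈ T

/-- The last state of a path (`A.ι` as a dummy for the empty path). -/
def lastSt (A : ABA σ Q) (π : List Q) : Q := π.getLastD A.ι

/-- A partial run of `A` on `w`: a finite tree in which every path either has no
successors or takes a transition of `A` on the appropriate letter of `w`. -/
structure IsPartialRun (A : ABA σ Q) (w : ℕ → σ) (T : Set (List Q)) : Prop where
  tree : IsTree T
  finite : T.Finite
  step : ∀ π ∈ T, succs T π = ∅ ∨ succs T π ∈ A.δ (lastSt A π) (w (π.length - 1))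

/-- A run of `A` on `w`. -/
structure IsRun (A : ABA σ Q) (w : ℕ → σ) (T : Set (List Q)) : Prop where
  tree : IsTree T
  step : ∀ π ∈ T, succs T π ∈ A.δ (lastSt A π) (w (π.length - 1))

/-- A (finite, maximal) branch of a tree. -/
def IsBranch (T : Set (List Q)) (π : List Q) : Prop := π ∈ T ∧ succs T π = ∅

/-- An infinite branch of a tree: all its nonempty finite prefixes belong to the tree. -/
def InfBranch (T : Set (List Q)) (ξ : ℕ → Q) : Prop :=
  ∀ n : ℕ, (List.ofFn fun i : Fin (n + 1) => ξ i) ∈ T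

/-- A run is accepting iff every infinite branch contains infinitely many accepting
states. -/
def Accepting (A : ABA σ Q) (T : Set (List Q)) : Prop :=
  ∀ ξ : ℕ → Q, InfBranch T ξ → ∀ n : ℕ, ∃ m ≥ n, ξ m ∈ A.α

/-- The language of `A`: the infinite words having an accepting run rooted at `ι`. -/
def ABA.Lang (A : ABA σ Q) : Set (ℕ → σ) :=
  {w | ∃ T : Set (List Q), IsRun A w T ∧ [A.ι] ∈ T ∧ Accepting A T}

/-- `p ≼_α r` : `p ∈ α ⇒ r ∈ α`. -/
def αle (A : ABA σ Q) (p r : Q) : Prop := p ∈ A.α → r ∈ A.α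

/-- A forward simulation on `A`. -/
def ForwardSim (A : ABA σ Q) (F : Q → Q → Prop) : Prop :=
  ∀ p r, F p r → (p ∈ A.α → r ∈ A.α) ∧
    ∀ a P, P ∈ A.δ p a → ∃ R ∈ A.δ r a, ∀ r' ∈ R, ∃ p' ∈ P, F p' r'

/-- A backward simulation on `A` parametrised by the forward simulation `F`. -/
def BackwardSim (A : ABA σ Q) (F B : Q → Q → Prop) : Prop :=
  ∀ p r, B p r → (p = A.ι → r = A.ι) ∧ (p ∈ A.α → r ∈ A.α) ∧
    ∀ a q P, p ∉ P → insert p P ∈ A.δ q a →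
      ∃ s R, r ∉ R ∧ insert r R ∈ A.δ s a ∧ B q s ∧ ∀ y ∈ R, ∃ x ∈ P, F x y

/-- `T ⊖_i π` (for `1 ≤ i ≤ |π|`, and all successors allowed when `i = |π|`):
the union of the branches of the suffix trees `T(π^i q)` for successors `q ≠ π_{i+1}`
of the prefix `π^i` of `π`. -/
def ominus (T : Set (List Q)) (π : List Q) (i : ℕ) : Set (List Q) :=
  {χ | χ ≠ [] ∧ χ.head? ≠ π[i]? ∧ π.take i ++ χ ∈ T ∧ succs T (π.take i ++ χ) = ∅}

-- helpers
lemma getLastD_irrel {l : List Q} (h : l ≠ []) (d d' : Q) : l.getLastD d = l.getLastD d' := by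
  cases l with
  | nil => exact absurd rfl h
  | cons a t => rw [List.getLastD_cons, List.getLastD_cons]

lemma getLastD_append (μ : List Q) {ρ : List Q} (h : ρ ≠ []) (d d' : Q) :
    (μ ++ ρ).getLastD d = ρ.getLastD d' := by
  induction μ generalizing d with
  | nil => simpa using getLastD_irrel h d d'
  | cons a t ih =>
      rw [List.cons_append, List.getLastD_cons, ih a]

lemma lastSt_concat (A : ABA σ Q) (l : List Q) (x : Q) : lastSt A (l ++ [x]) = x := by
  simp [lastSt, List.getLastD_concat]

lemma lastSt_of_getLast? (A : ABA σ Q) {l : List Q} {x : Q} (h : l.getLast? = some x) :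
    lastSt A l = x := by
  simp [lastSt, List.getLastD_eq_getLast?, h]

lemma ne_nil_of_head? {l : List Q} {x : Q} (h : l.head? = some x) : l ≠ [] := by
  rintro rfl; simp at h

lemma no_ext {V : Set (List Q)} (hpc : ∀ χ ∈ V, ∀ ρ : List Q, ρ <+: χ → ρ ≠ [] → ρ ∈ V)
    {μ : List Q} (hs : succs V μ = ∅) : ∀ τ : List Q, τ ≠ [] → μ ++ τ ∉ V := by
  intro τ hτ hmem
  obtain ⟨t₀, τ', rfl⟩ := List.exists_cons_of_ne_nil hτ
  have h1 : μ ++ [t₀] ∈ V := by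
    refine hpc _ hmem (μ ++ [t₀]) ⟨τ', by simp⟩ (by simp)
  have : t₀ ∈ succs V μ := h1
  rw [hs] at this
  exact this

lemma forall₂_concat {F : Q → Q → Prop} {l₁ l₂ : List Q} {a b : Q}
    (h : List.Forall₂ F l₁ l₂) (hab : F a b) : List.Forall₂ F (l₁ ++ [a]) (l₂ ++ [b]) := by
  induction h with
  | nil => simpa using hab
  | cons h1 _ ih => exact List.Forall₂.cons h1 ih

/-- The graft lemma: a forward-simulated copy of the subtree of `T` at `ν` rooted at `y`. -/
lemma graft (A : ABA σ Q) [Finite Q] (hne : A.NoEmpty)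
    {F : Q → Q → Prop} (hF : ForwardSim A F) (w : ℕ → σ)
    {T : Set (List Q)} (hT : IsPartialRun A w T) :
    ∀ n : ℕ, ∀ ν : List Q, ν ∈ T → (∀ ρ : List Q, ν ++ ρ ∈ T → ρ.length ≤ n) →
    ∀ y : Q, F (lastSt A ν) y →
    ∃ S : Set (List Q), S.Finite ∧ [y] ∈ S ∧
      (∀ χ ∈ S, χ.head? = some y) ∧
      (∀ χ ∈ S, ∀ ρ : List Q, ρ <+: χ → ρ ≠ [] → ρ ∈ S) ∧
      (∀ χ ∈ S, succs S χ = ∅ ∨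
        succs S χ ∈ A.δ (χ.getLastD y) (w (ν.length - 1 + χ.length - 1))) ∧
      (∀ χ ∈ S, succs S χ = ∅ → ∃ ρ' : List Q, ν ++ ρ' ∈ T ∧ succs T (ν ++ ρ') = ∅ ∧
        List.Forall₂ F (lastSt A ν :: ρ') χ) := by
  intro n
  induction n using Nat.strong_induction_on with
  | _ n ih =>
  intro ν hν hbd y hFy
  have hνne : ν ≠ [] := fun h => hT.tree.not_nil (h ▸ hν)
  rcases hT.step ν hν with hleaf | hstep
  · -- ν is a leaf of T
    refine ⟨{[y]}, Set.finite_singleton _, rfl, ?_, ?_, ?_, ?_⟩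
    · rintro χ rfl; rfl
    · rintro χ rfl ρ hρ hρne
      have hρ' : ρ <+: ([] : List Q) ++ [y] := by simpa using hρ
      rcases List.prefix_concat_iff.1 hρ' with h | h
      · simpa using h
      · exact absurd (List.prefix_nil.1 h) hρne
    · rintro χ rfl
      left; ext u; simp [succs]
    · rintro χ rfl _
      exact ⟨[], by simpa using hν, by simpa using hleaf, by simpa using hFy⟩
  · -- ν has children
    obtain ⟨R, hR, hsim⟩ := (hF _ _ hFy).2 _ _ hstep
    -- per-child grafts
    have key : ∀ y' : Q, ∃ S' : Set (List Q), y' ∈ R →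
        (S'.Finite ∧ [y'] ∈ S' ∧
        (∀ χ ∈ S', χ.head? = some y') ∧
        (∀ χ ∈ S', ∀ ρ : List Q, ρ <+: χ → ρ ≠ [] → ρ ∈ S') ∧
        (∀ χ ∈ S', succs S' χ = ∅ ∨
          succs S' χ ∈ A.δ (χ.getLastD y') (w (ν.length + χ.length - 1))) ∧
        (∀ χ ∈ S', succs S' χ = ∅ → ∃ ρ' : List Q, ν ++ ρ' ∈ T ∧ succs T (ν ++ ρ') = ∅ ∧
          List.Forall₂ F ρ' χ)) := by
      intro y'
      by_cases hy' : y' ∈ R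
      · obtain ⟨x, hxmem, hFx⟩ := hsim y' hy'
        have hν₂ : ν ++ [x] ∈ T := hxmem
        have hn1 : 1 ≤ n := by simpa using hbd [x] hν₂
        have hbd₂ : ∀ ρ : List Q, (ν ++ [x]) ++ ρ ∈ T → ρ.length ≤ n - 1 := by
          intro ρ h
          rw [List.append_assoc] at h
          have := hbd ([x] ++ ρ) h
          simp at this; omega
        obtain ⟨S', h1, h2, h3, h4, h5, h6⟩ :=
          ih (n - 1) (by omega) (ν ++ [x]) hν₂ hbd₂ y' (by rw [lastSt_concat]; exact hFx)
        refine ⟨S', fun _ => ⟨h1, h2, h3, h4, ?_, ?_⟩⟩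
        · intro χ hχ
          rcases h5 χ hχ with h | h
          · exact Or.inl h
          · right
            have hχne : χ ≠ [] := ne_nil_of_head? (h3 χ hχ)
            have hlen : (ν ++ [x]).length - 1 + χ.length - 1 = ν.length + χ.length - 1 := by
              simp only [List.length_append, List.length_singleton]; omega
            rwa [hlen] at h
        · intro χ hχ hs
          obtain ⟨ρ', hρ1, hρ2, hρ3⟩ := h6 χ hχ hs
          rw [lastSt_concat] at hρ3
          exact ⟨x :: ρ', by simpa using hρ1, by simpa using hρ2, hρ3⟩
      · exact ⟨∅, fun h => absurd h hy'⟩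
    choose Sf hSf using key
    set S : Set (List Q) :=
      {χ | χ = [y] ∨ ∃ y' ∈ R, ∃ ρ ∈ Sf y', χ = y :: ρ} with hSdef
    have hheadSf : ∀ y' ∈ R, ∀ ρ ∈ Sf y', ρ.head? = some y' := fun y' h ρ hρ =>
      (hSf y' h).2.2.1 ρ hρ
    have hSfne : ∀ y' ∈ R, ∀ ρ ∈ Sf y', ρ ≠ [] := fun y' h ρ hρ =>
      ne_nil_of_head? (hheadSf y' h ρ hρ)
    -- succs computations
    have hsucc1 : succs S [y] = R := by
      ext u
      simp only [succs, Set.mem_setOf_eq, hSdef, List.singleton_append]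
      constructor
      · rintro (h | ⟨y', hy', ρ, hρ, h⟩)
        · simp at h
        · injection h with h1 h2
          subst h2
          have := hheadSf y' hy' [u] hρ
          simp at this
          subst this
          exact hy'
      · intro hu
        exact Or.inr ⟨u, hu, [u], (hSf u hu).2.1, rfl⟩
    have hsucc2 : ∀ y' ∈ R, ∀ ρ ∈ Sf y', succs S (y :: ρ) = succs (Sf y') ρ := by
      intro y' hy' ρ hρ
      have hρne : ρ ≠ [] := hSfne y' hy' ρ hρ
      ext u
      simp only [succs, Set.mem_setOf_eq, hSdef, List.cons_append]
      constructor
      · rintro (h | ⟨y₂, hy₂, ρ₂, hρ₂, h⟩)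
        · exfalso
          have h2 : ρ ++ [u] = [] := by
            injection h
          simp at h2
        · injection h with h1 h2
          subst h2
          have heq : y₂ = y' := by
            have e1 := hheadSf y₂ hy₂ (ρ ++ [u]) hρ₂
            have e2 := hheadSf y' hy' ρ hρ
            rw [List.head?_append_of_ne_nil _ hρne] at e1
            rw [e2] at e1
            exact (Option.some.inj e1).symm
          subst heq
          exact hρ₂
      · intro hu
        exact Or.inr ⟨y', hy', ρ ++ [u], hu, rfl⟩
    have hmemS : ∀ y' ∈ R, ∀ ρ ∈ Sf y', y :: ρ ∈ S := by
      intro y' hy' ρ hρ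
      exact Or.inr ⟨y', hy', ρ, hρ, rfl⟩
    refine ⟨S, ?_, Or.inl rfl, ?_, ?_, ?_, ?_⟩
    · -- finiteness
      have hsub : S ⊆ insert [y] (⋃ y' ∈ R, (fun ρ => y :: ρ) '' Sf y') := by
        rintro χ (rfl | ⟨y', hy', ρ, hρ, rfl⟩)
        · exact Set.mem_insert _ _
        · exact Set.mem_insert_of_mem _ (Set.mem_biUnion hy' ⟨ρ, hρ, rfl⟩)
      exact Set.Finite.subset
        ((Set.Finite.biUnion R.toFinite fun y' hy' => ((hSf y' hy').1.image _)).insert _) hsub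
    · -- heads
      rintro χ (rfl | ⟨y', hy', ρ, hρ, rfl⟩) <;> rfl
    · -- prefix closed
      rintro χ (rfl | ⟨y', hy', ρ, hρ, rfl⟩) ρ₀ hρ₀ hρ₀ne
      · have hρ' : ρ₀ <+: ([] : List Q) ++ [y] := by simpa using hρ₀
        rcases List.prefix_concat_iff.1 hρ' with h | h
        · simp at h
          subst h
          exact Or.inl rfl
        · exact absurd (List.prefix_nil.1 h) hρ₀ne
      · obtain ⟨t, ht⟩ := hρ₀
        cases ρ₀ with
        | nil => exact absurd rfl hρ₀ne
        | cons c ρ₁ =>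
          injection ht with h1 h2
          subst h1
          rcases List.eq_nil_or_concat ρ₁ with rfl | ⟨ρ₂, u, rfl⟩
          · exact Or.inl rfl
          · simp only [List.concat_eq_append] at h2 ⊢
            have hpre : ρ₂ ++ [u] <+: ρ := ⟨t, h2⟩
            exact Or.inr ⟨y', hy', ρ₂ ++ [u],
              (hSf y' hy').2.2.2.1 ρ hρ _ hpre (by simp), rfl⟩
    · -- step
      rintro χ (rfl | ⟨y', hy', ρ, hρ, rfl⟩)
      · right
        rw [hsucc1]
        have : ([y] : List Q).length = 1 := rfl
        have hνl : 1 ≤ ν.length := List.length_pos_iff.2 hνne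
        have hidx : ν.length - 1 + ([y] : List Q).length - 1 = ν.length - 1 := by
          simp
        rw [hidx]
        simpa using hR
      · rw [hsucc2 y' hy' ρ hρ]
        rcases (hSf y' hy').2.2.2.2.1 ρ hρ with h | h
        · exact Or.inl h
        · right
          have hρne : ρ ≠ [] := hSfne y' hy' ρ hρ
          have hρl : 1 ≤ ρ.length := List.length_pos_iff.2 hρne
          have hνl : 1 ≤ ν.length := List.length_pos_iff.2 hνne
          have hidx : ν.length - 1 + (y :: ρ).length - 1 = ν.length + ρ.length - 1 := by
            simp only [List.length_cons]; omega
          rw [hidx]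
          have hlst : (y :: ρ).getLastD y = ρ.getLastD y' := by
            rw [List.getLastD_cons]
            exact getLastD_irrel hρne y y'
          rw [hlst]
          exact h
    · -- matching
      rintro χ (rfl | ⟨y', hy', ρ, hρ, rfl⟩) hs
      · exfalso
        rw [hsucc1] at hs
        subst hs
        exact hne y _ hR
      · rw [hsucc2 y' hy' ρ hρ] at hs
        obtain ⟨ρ', hρ1, hρ2, hρ3⟩ := (hSf y' hy').2.2.2.2.2 ρ hρ hs
        exact ⟨ρ', hρ1, hρ2, List.Forall₂.cons hFy hρ3⟩

lemma main_lemma (A : ABA σ Q) [Finite Q] (hne : A.NoEmpty)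
    {F B : Q → Q → Prop} (hF : ForwardSim A F) (hB : BackwardSim A F B) (w : ℕ → σ) :
    ∀ n : ℕ, ∀ T : Set (List Q), ∀ π : List Q, ∀ p r : Q,
    π.length ≤ n → B p r → IsPartialRun A w T → IsBranch T π → π.getLast? = some p →
    ∃ (U : Set (List Q)) (ψ : List Q), IsPartialRun A w U ∧ IsBranch U ψ ∧
      ψ.getLast? = some r ∧ List.Forall₂ B π ψ ∧
      ∀ i : ℕ, 1 ≤ i → i ≤ π.length →
        ∀ χ' ∈ ominus U ψ i, ∃ χ ∈ ominus T π i, List.Forall₂ F χ χ' := by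
  intro n
  induction n with
  | zero =>
      intro T π p r hlen hpr hT hπ hlast
      exfalso
      have : π = [] := List.length_eq_zero_iff.1 (Nat.le_zero.1 hlen)
      subst this; simp at hlast
  | succ n ih =>
      intro T π p r hlen hpr hT hπ hlast
      have hπT := hπ.1
      have hπne : π ≠ [] := by rintro rfl; simp at hlast
      by_cases h1 : π.length = 1
      · -- base case : π = [p]
        obtain ⟨a, ta, rfl⟩ := List.exists_cons_of_ne_nil hπne
        have hta : ta = [] := by
          have := h1; simp only [List.length_cons] at this
          exact List.length_eq_zero_iff.1 (by omega)
        subst hta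
        have hap : a = p := by simpa using hlast
        subst hap
        refine ⟨{[r]}, [r], ?_, ⟨rfl, ?_⟩, by simp, ?_, ?_⟩
        · refine ⟨⟨by simp, ?_, ⟨r, rfl, fun z hz => by simpa using hz⟩⟩,
            Set.finite_singleton _, ?_⟩
          · rintro χ hχ ρ hρ hρne
            simp only [Set.mem_singleton_iff] at hχ
            subst hχ
            have hρ' : ρ <+: ([] : List Q) ++ [r] := by simpa using hρ
            rcases List.prefix_concat_iff.1 hρ' with h | h
            · simpa using h
            · exact absurd (List.prefix_nil.1 h) hρne
          · rintro χ hχ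
            simp only [Set.mem_singleton_iff] at hχ
            subst hχ
            left; ext u
            simp only [succs, Set.mem_setOf_eq, Set.mem_singleton_iff,
              Set.mem_empty_iff_false, iff_false]
            intro h
            have := congrArg List.length h
            simp at this
        · ext u
          simp only [succs, Set.mem_setOf_eq, Set.mem_singleton_iff,
            Set.mem_empty_iff_false, iff_false]
          intro h
          have := congrArg List.length h
          simp at this
        · exact List.Forall₂.cons hpr List.Forall₂.nil
        · intro i hi1 hi2 χ' hχ'
          exfalso
          simp only [List.length_cons, List.length_nil] at hi2
          have hi : i = 1 := by omega
          subst hi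
          obtain ⟨hc1, hc2, hc3, hc4⟩ := hχ'
          have : χ' = [] := by simpa using hc3
          exact hc1 this
      · -- inductive case
        have hlen2 : 2 ≤ π.length := by
          have : 1 ≤ π.length := List.length_pos_iff.2 hπne
          omega
        set π' := π.dropLast with hπ'def
        have hp : π.getLast hπne = p := by
          rw [List.getLast?_eq_getLast hπne] at hlast
          exact Option.some.inj hlast
        have hππ' : π' ++ [p] = π := by
          rw [← hp]; exact List.dropLast_append_getLast hπne
        have hπ'len : π'.length = π.length - 1 := by
          simp [hπ'def]
        have hπ'ne : π' ≠ [] := by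
          intro h
          rw [h] at hπ'len
          simp at hπ'len
          omega
        have hπ'T : π' ∈ T := hT.tree.prefix_closed π hπT π' ⟨[p], hππ'⟩ hπ'ne
        have hq : π'.getLast? = some (π'.getLast hπ'ne) := List.getLast?_eq_getLast hπ'ne
        set q := π'.getLast hπ'ne with hqdef
        have hlstπ' : lastSt A π' = q := lastSt_of_getLast? A hq
        have hpP : p ∈ succs T π' := by
          show π' ++ [p] ∈ T
          rw [hππ']; exact hπT
        have hP0 : succs T π' ∈ A.δ q (w (π'.length - 1)) := by
          rcases hT.step π' hπ'T with h | h
          · rw [h] at hpP; exact absurd hpP (Set.notMem_empty p)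
          · rwa [hlstπ'] at h
        obtain ⟨s, R, hrR, hins, hqs, hRF⟩ :=
          (hB p r hpr).2.2 (w (π'.length - 1)) q (succs T π' \ {p})
            (by simp) (by rwa [Set.insert_diff_singleton, Set.insert_eq_self.mpr hpP])
        -- pruned tree T'
        set T' : Set (List Q) := {χ | χ ∈ T ∧ (π' <+: χ → χ = π')} with hT'def
        have hT'sub : T' ⊆ T := fun χ h => h.1
        have hsuccT' : ∀ χ : List Q, ¬ (π' <+: χ) → succs T' χ = succs T χ := by
          intro χ hnp
          ext u
          simp only [succs, Set.mem_setOf_eq, hT'def]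
          constructor
          · exact fun h => h.1
          · intro h
            refine ⟨h, fun hpre => ?_⟩
            rcases List.prefix_concat_iff.1 hpre with h2 | h2
            · exact h2.symm
            · exact absurd h2 hnp
        have hsuccT'π' : succs T' π' = ∅ := by
          ext u
          simp only [succs, Set.mem_setOf_eq, hT'def, Set.mem_empty_iff_false, iff_false]
          rintro ⟨h1, h2⟩
          have h3 := h2 ⟨[u], rfl⟩
          have := congrArg List.length h3
          simp at this
        have hT' : IsPartialRun A w T' := by
          refine ⟨⟨fun h => hT.tree.not_nil h.1, ?_, ?_⟩, hT.finite.subset hT'sub, ?_⟩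
          · intro χ hχ ρ hρ hρne
            refine ⟨hT.tree.prefix_closed χ hχ.1 ρ hρ hρne, fun hpre => ?_⟩
            by_cases h : π' <+: χ
            · have hχπ : χ = π' := hχ.2 h
              subst hχπ
              exact (hpre.eq_of_length (le_antisymm hpre.length_le hρ.length_le)).symm
            · exact absurd (hpre.trans hρ) h
          · obtain ⟨q₀, hq₀, huniq⟩ := hT.tree.root
            refine ⟨q₀, ⟨hq₀, fun hpre => ?_⟩, fun z hz => huniq z hz.1⟩
            have h1' : 1 ≤ π'.length := List.length_pos_iff.2 hπ'ne
            have h2' : π'.length ≤ 1 := by simpa using hpre.length_le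
            exact (hpre.eq_of_length (by simp; omega)).symm
          · intro χ hχ
            by_cases hx : π' <+: χ
            · have : χ = π' := hχ.2 hx
              subst this
              exact Or.inl hsuccT'π'
            · rw [hsuccT' χ hx]
              exact hT.step χ hχ.1
        have hbr' : IsBranch T' π' := ⟨⟨hπ'T, fun _ => rfl⟩, hsuccT'π'⟩
        obtain ⟨U', ψ', hU', hψ'br, hψ's, hBψ', hom'⟩ :=
          ih T' π' q s (by omega) hqs hT' hbr' hq
        have hlenψ' : ψ'.length = π'.length := (List.Forall₂.length_eq hBψ').symm
        have hψ'ne : ψ' ≠ [] := by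
          intro h
          rw [h] at hlenψ'
          simp at hlenψ'
          omega
        have hlsts : lastSt A ψ' = s := lastSt_of_getLast? A hψ's
        obtain ⟨N, hN⟩ : ∃ N : ℕ, ∀ χ ∈ T, χ.length ≤ N := by
          obtain ⟨N, hN⟩ := (hT.finite.image List.length).bddAbove
          exact ⟨N, fun χ hχ => hN ⟨χ, hχ, rfl⟩⟩
        have key : ∀ y : Q, ∃ S' : Set (List Q), y ∈ R →
            (S'.Finite ∧ [y] ∈ S' ∧
            (∀ χ ∈ S', χ.head? = some y) ∧
            (∀ χ ∈ S', ∀ ρ : List Q, ρ <+: χ → ρ ≠ [] → ρ ∈ S') ∧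
            (∀ χ ∈ S', succs S' χ = ∅ ∨
              succs S' χ ∈ A.δ (χ.getLastD y) (w (π'.length + χ.length - 1))) ∧
            (∀ χ ∈ S', succs S' χ = ∅ → ∃ χT : List Q, χT.head? ≠ some p ∧
              π' ++ χT ∈ T ∧ succs T (π' ++ χT) = ∅ ∧ List.Forall₂ F χT χ)) := by
          intro y
          by_cases hy : y ∈ R
          · obtain ⟨x, hxP, hFxy⟩ := hRF y hy
            have hxT : x ∈ succs T π' := hxP.1
            have hxp : x ≠ p := hxP.2
            have hνT : π' ++ [x] ∈ T := hxT
            have hbdx : ∀ ρ : List Q, (π' ++ [x]) ++ ρ ∈ T → ρ.length ≤ N := by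
              intro ρ h
              have := hN _ h
              simp only [List.length_append] at this
              omega
            obtain ⟨S', h1, h2, h3, h4, h5, h6⟩ :=
              graft A hne hF w hT N (π' ++ [x]) hνT hbdx y (by rw [lastSt_concat]; exact hFxy)
            refine ⟨S', fun _ => ⟨h1, h2, h3, h4, ?_, ?_⟩⟩
            · intro χ hχ
              rcases h5 χ hχ with h | h
              · exact Or.inl h
              · right
                have hidx : (π' ++ [x]).length - 1 + χ.length - 1 = π'.length + χ.length - 1 := by
                  simp only [List.length_append, List.length_singleton]; omega
                rwa [hidx] at h
            · intro χ hχ hs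
              obtain ⟨ρ', hρ1, hρ2, hρ3⟩ := h6 χ hχ hs
              rw [lastSt_concat] at hρ3
              refine ⟨x :: ρ', ?_, by simpa using hρ1, by simpa using hρ2, hρ3⟩
              simp only [List.head?_cons, ne_eq, Option.some.injEq]
              exact hxp
          · exact ⟨∅, fun h => absurd h hy⟩
        choose Sf hSf using key
        have hheadSf : ∀ y ∈ R, ∀ ρ ∈ Sf y, ρ.head? = some y := fun y hy => (hSf y hy).2.2.1
        have hSfnil : ∀ y ∈ R, ∀ ρ ∈ Sf y, ρ ≠ [] := fun y hy ρ hρ =>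
          ne_nil_of_head? (hheadSf y hy ρ hρ)
        set U : Set (List Q) :=
          U' ∪ {χ | ∃ ρ : List Q, (ρ = [r] ∨ ∃ y ∈ R, ρ ∈ Sf y) ∧ χ = ψ' ++ ρ} with hUdef
        set ψ : List Q := ψ' ++ [r] with hψdef
        have hρgood : ∀ ρ : List Q, (ρ = [r] ∨ ∃ y ∈ R, ρ ∈ Sf y) → ρ ≠ [] := by
          rintro ρ (rfl | ⟨y, hy, hρ⟩)
          · simp
          · exact hSfnil y hy ρ hρ
        have hnoext : ∀ τ : List Q, τ ≠ [] → ψ' ++ τ ∉ U' :=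
          no_ext hU'.tree.prefix_closed hψ'br.2
        -- successor computations in U
        have hmemU2 : ∀ ρ : List Q, (ρ = [r] ∨ ∃ y ∈ R, ρ ∈ Sf y) → ψ' ++ ρ ∈ U := by
          intro ρ h
          exact Or.inr ⟨ρ, h, rfl⟩
        have hsuccU' : ∀ χ ∈ U', χ ≠ ψ' → succs U χ = succs U' χ := by
          intro χ hχ hne'
          ext u
          simp only [succs, hUdef, Set.mem_union, Set.mem_setOf_eq]
          constructor
          · rintro (h | ⟨ρ, hρg, h⟩)
            · exact h
            · exfalso
              have hρne := hρgood ρ hρg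
              have hpre : ψ' <+: χ ++ [u] := ⟨ρ, h.symm⟩
              rcases List.prefix_concat_iff.1 hpre with h2 | h2
              · have h3 : ψ' ++ ρ = ψ' ++ [] := by
                  rw [List.append_nil, ← h, h2]
                exact hρne (List.append_cancel_left h3)
              · obtain ⟨τ, rfl⟩ := h2
                rcases eq_or_ne τ [] with rfl | hτ
                · exact hne' (by simp)
                · exact hnoext τ hτ hχ
          · exact fun h => Or.inl h
        have hsuccψ' : succs U ψ' = insert r R := by
          ext u
          simp only [succs, hUdef, Set.mem_union, Set.mem_setOf_eq, Set.mem_insert_iff]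
          constructor
          · rintro (h | ⟨ρ, hρg, h⟩)
            · exact absurd h (hnoext [u] (by simp))
            · have hρu : [u] = ρ := List.append_cancel_left h
              subst hρu
              rcases hρg with h2 | ⟨y, hy, h2⟩
              · left; simpa using h2
              · right
                have := hheadSf y hy [u] h2
                simp only [List.head?_cons, Option.some.injEq] at this
                subst this
                exact hy
          · rintro (rfl | hu)
            · exact Or.inr ⟨[u], Or.inl rfl, rfl⟩
            · exact Or.inr ⟨[u], Or.inr ⟨u, hu, (hSf u hu).2.1⟩, rfl⟩
        have hsuccψ : succs U (ψ' ++ [r]) = ∅ := by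
          ext u
          simp only [succs, hUdef, Set.mem_union, Set.mem_setOf_eq,
            Set.mem_empty_iff_false, iff_false]
          rintro (h | ⟨ρ, hρg, h⟩)
          · exact hnoext ([r] ++ [u]) (by simp) (by rwa [← List.append_assoc])
          · rw [List.append_assoc] at h
            have hρu : [r] ++ [u] = ρ := List.append_cancel_left h
            subst hρu
            rcases hρg with h2 | ⟨y, hy, h2⟩
            · have := congrArg List.length h2
              simp at this
            · have := hheadSf y hy _ h2
              simp only [List.cons_append, List.head?_cons, Option.some.injEq] at this
              subst this
              exact hrR hy
        have hsuccSf : ∀ y ∈ R, ∀ ρ ∈ Sf y, succs U (ψ' ++ ρ) = succs (Sf y) ρ := by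
          intro y hy ρ hρ
          have hρne := hSfnil y hy ρ hρ
          ext u
          simp only [succs, hUdef, Set.mem_union, Set.mem_setOf_eq]
          constructor
          · rintro (h | ⟨ρ₂, hρg, h⟩)
            · exact absurd (by rwa [← List.append_assoc]) (hnoext (ρ ++ [u]) (by simp))
            · rw [List.append_assoc] at h
              have hρu : ρ ++ [u] = ρ₂ := List.append_cancel_left h
              subst hρu
              rcases hρg with h2 | ⟨y₂, hy₂, h2⟩
              · exfalso
                have := congrArg List.length h2
                simp only [List.length_append, List.length_singleton, List.length_cons,
                  List.length_nil] at this
                have : ρ.length = 0 := by omega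
                exact hρne (List.length_eq_zero_iff.1 this)
              · have e1 := hheadSf y₂ hy₂ _ h2
                rw [List.head?_append_of_ne_nil _ hρne, hheadSf y hy ρ hρ] at e1
                have : y = y₂ := Option.some.inj e1
                subst this
                exact h2
          · intro h
            exact Or.inr ⟨ρ ++ [u], Or.inr ⟨y, hy, h⟩, by rw [List.append_assoc]⟩
        have hUtree : IsTree U := by
          refine ⟨?_, ?_, ?_⟩
          · rintro (h | ⟨ρ, hρg, h⟩)
            · exact hU'.tree.not_nil h
            · have := congrArg List.length h
              have hρne := hρgood ρ hρg
              have h1' : 1 ≤ ψ'.length := List.length_pos_iff.2 hψ'ne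
              have h2' : 1 ≤ ρ.length := List.length_pos_iff.2 hρne
              simp only [List.length_nil, List.length_append] at this
              omega
          · rintro χ (hχ | ⟨ρ, hρg, rfl⟩) ρ₀ hρ₀ hρ₀ne
            · exact Or.inl (hU'.tree.prefix_closed χ hχ ρ₀ hρ₀ hρ₀ne)
            · by_cases hl : ρ₀.length ≤ ψ'.length
              · exact Or.inl (hU'.tree.prefix_closed ψ' hψ'br.1 ρ₀
                  (List.prefix_of_prefix_length_le hρ₀ ⟨ρ, rfl⟩ hl) hρ₀ne)
              · have heq : ρ₀ = ψ' ++ ρ.take (ρ₀.length - ψ'.length) := by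
                  have heq0 := List.prefix_iff_eq_take.1 hρ₀
                  rw [List.take_append,
                    List.take_of_length_le (by omega)] at heq0
                  exact heq0
                have hkpos : 1 ≤ ρ₀.length - ψ'.length := by omega
                have htkne : ρ.take (ρ₀.length - ψ'.length) ≠ [] := by
                  intro h
                  rw [List.take_eq_nil_iff] at h
                  rcases h with h | h
                  · omega
                  · exact hρgood ρ hρg h
                refine Or.inr ⟨ρ.take (ρ₀.length - ψ'.length), ?_, heq⟩
                rcases hρg with rfl | ⟨y, hy, hρSf⟩
                · left
                  have : ρ₀.length - ψ'.length = 1 := by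
                    have := congrArg List.length heq
                    simp only [List.length_append, List.length_take,
                      List.length_singleton] at this
                    omega
                  rw [this]
                  rfl
                · exact Or.inr ⟨y, hy, (hSf y hy).2.2.2.1 _ hρSf _ (List.take_prefix _ _) htkne⟩
          · obtain ⟨q₀, hq₀, huniq⟩ := hU'.tree.root
            refine ⟨q₀, Or.inl hq₀, ?_⟩
            rintro z (hz | ⟨ρ, hρg, hz⟩)
            · exact huniq z hz
            · exfalso
              have := congrArg List.length hz
              have h1' : 1 ≤ ψ'.length := List.length_pos_iff.2 hψ'ne
              have h2' : 1 ≤ ρ.length := List.length_pos_iff.2 (hρgood ρ hρg)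
              simp only [List.length_cons, List.length_nil, List.length_append] at this
              omega
        have hUfin : U.Finite := by
          refine Set.Finite.union hU'.finite
            (Set.Finite.subset (Set.Finite.image (fun ρ => ψ' ++ ρ)
              ((Set.finite_singleton [r]).union
                (Set.Finite.biUnion R.toFinite fun y hy => (hSf y hy).1))) ?_)
          rintro χ ⟨ρ, hρg, rfl⟩
          refine ⟨ρ, ?_, rfl⟩
          rcases hρg with rfl | ⟨y, hy, hρSf⟩
          · exact Or.inl rfl
          · exact Or.inr (Set.mem_biUnion hy hρSf)
        have hUstep : ∀ χ ∈ U, succs U χ = ∅ ∨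
            succs U χ ∈ A.δ (lastSt A χ) (w (χ.length - 1)) := by
          rintro χ (hχ | ⟨ρ, hρg, rfl⟩)
          · by_cases hx : χ = ψ'
            · subst hx
              right
              rw [hsuccψ', hlsts, hlenψ']
              exact hins
            · rw [hsuccU' χ hχ hx]
              exact hU'.step χ hχ
          · rcases hρg with rfl | ⟨y, hy, hρSf⟩
            · exact Or.inl hsuccψ
            · rw [hsuccSf y hy ρ hρSf]
              rcases (hSf y hy).2.2.2.2.1 ρ hρSf with h | h
              · exact Or.inl h
              · right
                have hρne := hSfnil y hy ρ hρSf
                have hlst : lastSt A (ψ' ++ ρ) = ρ.getLastD y :=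
                  getLastD_append ψ' hρne _ _
                have hidx : (ψ' ++ ρ).length - 1 = π'.length + ρ.length - 1 := by
                  simp only [List.length_append, hlenψ']
                rw [hlst, hidx]
                exact h
        refine ⟨U, ψ, ⟨hUtree, hUfin, hUstep⟩, ⟨hmemU2 [r] (Or.inl rfl), hsuccψ⟩, by simp [hψdef], ?_, ?_⟩
        · rw [← hππ', hψdef]
          exact forall₂_concat hBψ' hpr
        · intro i hi1 hi2 χ' hχ'
          obtain ⟨hc1, hc2, hc3, hc4⟩ := hχ'
          have hπlen : π.length = π'.length + 1 := by rw [← hππ']; simp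
          have hψlen : ψ.length = ψ'.length + 1 := by simp [hψdef]
          by_cases hitop : i = π.length
          · exfalso
            have htake : ψ.take i = ψ :=
              List.take_of_length_le (by rw [hψlen, hlenψ']; omega)
            rw [htake] at hc3
            rcases hc3 with h | ⟨ρ, hρg, h⟩
            · exact hnoext ([r] ++ χ') (by simp) (by rwa [hψdef, List.append_assoc] at h)
            · rw [hψdef, List.append_assoc] at h
              have hρe : [r] ++ χ' = ρ := List.append_cancel_left h
              subst hρe
              rcases hρg with h2 | ⟨y, hy, h2⟩
              · have : χ' = [] := by simpa using h2
                exact hc1 this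
              · have := hheadSf y hy _ h2
                simp only [List.cons_append, List.head?_cons, Option.some.injEq] at this
                subst this
                exact hrR hy
          · have hile : i ≤ π'.length := by omega
            have hileψ : i ≤ ψ'.length := by omega
            have htakeψ : ψ.take i = ψ'.take i := by
              rw [hψdef]; exact List.take_append_of_le_length hileψ
            have htakeπ : π.take i = π'.take i := by
              rw [← hππ']; exact List.take_append_of_le_length hile
            rw [htakeψ] at hc3 hc4
            rcases hc3 with hm | ⟨ρ, hρg, hm⟩
            · -- the node lies in U'
              by_cases hieq : i = π'.length
              · exfalso
                have htk : ψ'.take i = ψ' := List.take_of_length_le (by omega)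
                rw [htk] at hm
                exact hnoext χ' hc1 hm
              · have hilt2 : i < π'.length := by omega
                have hgeti : ψ[i]? = ψ'[i]? := by
                  rw [hψdef]; exact List.getElem?_append_left (by omega)
                rw [hgeti] at hc2
                have hχ'om : χ' ∈ ominus U' ψ' i := by
                  refine ⟨hc1, hc2, hm, ?_⟩
                  ext u
                  simp only [Set.mem_empty_iff_false, iff_false]
                  intro hu
                  have h2 : u ∈ succs U (ψ'.take i ++ χ') := Or.inl hu
                  rw [hc4] at h2
                  exact h2
                obtain ⟨χ, hχom, hFχ⟩ := hom' i hi1 (by omega) χ' hχ'om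
                obtain ⟨hd1, hd2, hd3, hd4⟩ := hχom
                have hnp : ¬ (π' <+: π'.take i ++ χ) := by
                  intro hpre
                  obtain ⟨t, ht⟩ := hpre
                  have e1 : (π'.take i ++ χ)[i]? = χ.head? := by
                    rw [List.getElem?_append_right (by rw [List.length_take]; omega),
                      List.length_take]
                    have hmin : i - min i π'.length = 0 := by omega
                    rw [hmin]
                    exact (List.head?_eq_getElem? (l := χ)).symm
                  have e2 : (π'.take i ++ χ)[i]? = π'[i]? := by
                    rw [← ht, List.getElem?_append_left hilt2]
                  exact hd2 (e1.symm.trans e2)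
                have hπi : π[i]? = π'[i]? := by
                  rw [← hππ']; exact List.getElem?_append_left hilt2
                refine ⟨χ, ⟨hd1, by rw [hπi]; exact hd2, ?_, ?_⟩, hFχ⟩
                · rw [htakeπ]; exact hT'sub hd3
                · rw [htakeπ, ← hsuccT' _ hnp]; exact hd4
            · -- the node is grafted
              have hχ'eq : χ' = ψ'.drop i ++ ρ := by
                have h3 : ψ'.take i ++ χ' = ψ'.take i ++ (ψ'.drop i ++ ρ) := by
                  rw [← List.append_assoc, List.take_append_drop]
                  exact hm
                exact List.append_cancel_left h3
              by_cases hieq : i = π'.length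
              · have hdrop : ψ'.drop i = [] := by
                  rw [List.drop_eq_nil_iff]; omega
                rw [hdrop, List.nil_append] at hχ'eq
                subst hχ'eq
                rcases hρg with h2 | ⟨y, hy, hρSf⟩
                · exfalso
                  apply hc2
                  subst h2
                  rw [hψdef]
                  have hi' : i = ψ'.length := by omega
                  rw [hi', List.getElem?_concat_length]
                  rfl
                · have htk : ψ'.take i = ψ' := List.take_of_length_le (by omega)
                  rw [htk] at hc4
                  have hsm : succs (Sf y) χ' = ∅ := by
                    rw [← hsuccSf y hy χ' hρSf]; exact hc4
                  obtain ⟨χT, ht1, ht2, ht3, ht4⟩ := (hSf y hy).2.2.2.2.2 χ' hρSf hsm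
                  have hπtk : π.take i = π' := by
                    rw [← hππ', hieq]
                    exact List.take_left (l₁ := π') (l₂ := [p])
                  have hπgi : π[i]? = some p := by
                    rw [← hππ', hieq]
                    exact List.getElem?_concat_length (l := π') (a := p)
                  refine ⟨χT, ⟨?_, ?_, ?_, ?_⟩, ht4⟩
                  · intro h
                    rw [h] at ht4
                    have := ht4.length_eq
                    simp only [List.length_nil] at this
                    exact hc1 (List.length_eq_zero_iff.1 this.symm)
                  · rw [hπgi]; exact ht1
                  · rw [hπtk]; exact ht2
                  · rw [hπtk]; exact ht3
              · exfalso
                have hilt2 : i < ψ'.length := by omega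
                have hdne : ψ'.drop i ≠ [] := by
                  rw [ne_eq, List.drop_eq_nil_iff]; omega
                apply hc2
                rw [hχ'eq, List.head?_append_of_ne_nil _ hdne, List.head?_drop, hψdef]
                exact (List.getElem?_append_left hilt2).symm

/-- Backward-simulation lemma on partial runs: if `p ≼_B r`, `T` is a partial run on `w`
and `π` a branch of `T` with `leaf(π) = p`, then there are a partial run `U` on `w` and
a branch `ψ` of `U` with `leaf(ψ) = r` such that `π ≼_B ψ` componentwise and
`T ⊖_i π ≼_F^∀∃ U ⊖_i ψ` for all `1 ≤ i ≤ |π|`. -/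
theorem stmt_9 [Finite σ] [Finite Q] (A : ABA σ Q) (hne : A.NoEmpty)
    (F B : Q → Q → Prop)
    (hFr : Reflexive F) (hFt : Transitive F) (hF : ForwardSim A F)
    (hBr : Reflexive B) (hBt : Transitive B) (hB : BackwardSim A F B)
    (p r : Q) (hpr : B p r) (w : ℕ → σ) (T : Set (List Q))
    (hT : IsPartialRun A w T) (π : List Q) (hπ : IsBranch T π)
    (hlast : π.getLast? = some p) :
    ∃ (U : Set (List Q)) (ψ : List Q), IsPartialRun A w U ∧ IsBranch U ψ ∧
      ψ.getLast? = some r ∧ List.Forall₂ B π ψ ∧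
      ∀ i : ℕ, 1 ≤ i → i ≤ π.length →
        ∀ χ' ∈ ominus U ψ i, ∃ χ ∈ ominus T π i, List.Forall₂ F χ χ' :=
  main_lemma A hne hF hB w π.length T π p r le_rfl hpr hT hπ hlast
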